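/- Let (Y, A, X) be a recollement of abelian categories where A is AB3* and AB4, and assume that for every set-indexed family of objects in A the canonical morphism from the coproduct to the product is a monomorphism. Then i^! : A → Y commutes with coproducts. -/

import Mathlib

open CategoryTheory Limits

universe v u u₁ u₂ u₃

/-- A recollement of categories: adjoint triples `(i^*, i_*, i^!)` and `(j_!, j^*, j_*)`,
with `i_*`, `j_!`, `j_*` fully faithful and the essential image of `i_*` equal to the
kernel of `j^*`. -/
structure Recollement (Y : Type u₁) (A : Type u₂) (X : Type u₃)
    [Category.{v} Y] [Category.{v} A] [Category.{v} X] where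
  /-- `i_* : Y ⥤ A` -/
  iStar : Y ⥤ A
  /-- `i^* : A ⥤ Y` -/
  iUp : A ⥤ Y
  /-- `i^! : A ⥤ Y` -/
  iShriek : A ⥤ Y
  /-- `j^* : A ⥤ X` -/
  jUp : A ⥤ X
  /-- `j_! : X ⥤ A` -/
  jLower : X ⥤ A
  /-- `j_* : X ⥤ A` -/
  jRight : X ⥤ A
  adj_i₁ : iUp ⊣ iStar
  adj_i₂ : iStar ⊣ iShriek
  adj_j₁ : jLower ⊣ jUp
  adj_j₂ : jUp ⊣ jRight
  iStar_full : iStar.Full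
  iStar_faithful : iStar.Faithful
  jLower_full : jLower.Full
  jLower_faithful : jLower.Faithful
  jRight_full : jRight.Full
  jRight_faithful : jRight.Faithful
  essImage_iff : ∀ M : A, iStar.essImage M ↔ IsZero (jUp.obj M)

variable {Y : Type u₁} {A : Type u₂} {X : Type u₃}
  [Category.{v} Y] [Category.{v} A] [Category.{v} X]

/-- The class `C = Ker i^*` of the TTF triple associated to a recollement. -/
def Recollement.C (R : Recollement Y A X) : A → Prop := fun M => IsZero (R.iUp.obj M)

/-- The class `T = Im i_*` of the TTF triple associated to a recollement. -/
def Recollement.T (R : Recollement Y A X) : A → Prop := fun M => R.iStar.essImage M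

/-- The class `F = Ker i^!` of the TTF triple associated to a recollement. -/
def Recollement.F (R : Recollement Y A X) : A → Prop := fun M => IsZero (R.iShriek.obj M)

/-- An (additive) functor between abelian categories is exact if it preserves finite
limits and finite colimits. -/
def IsExactFunctor {C D : Type*} [Category C] [Category D] (G : C ⥤ D) : Prop :=
  Nonempty (PreservesFiniteLimits G) ∧ Nonempty (PreservesFiniteColimits G)

/-- The canonical morphism from a coproduct to the product of the same family. -/
noncomputable def coprodToProd {C : Type u} [Category.{v} C] [Abelian C]
    [HasCoproducts.{v} C] [HasProducts.{v} C] {I : Type v} (f : I → C) :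
    (∐ f) ⟶ ∏ᶜ f :=
  letI : DecidableEq I := Classical.decEq I
  Sigma.desc fun i => Pi.lift fun j =>
    if h : i = j then eqToHom (congrArg f h) else 0

section Aux

variable [Abelian Y] [Abelian A] [Abelian X] (R : Recollement Y A X)

/-- the counit of `i_* ⊣ i^!` is mono. -/
lemma aux_counit_mono (M : A) : Mono (R.adj_i₂.counit.app M) := by
  haveI := R.iStar_full; haveI := R.iStar_faithful
  haveI := R.adj_i₂.isRightAdjoint
  haveI : PreservesLimitsOfSize.{v, v} R.iShriek := R.adj_i₂.rightAdjoint_preservesLimits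
  haveI : PreservesLimitsOfSize.{v, v} R.jUp := R.adj_j₁.rightAdjoint_preservesLimits
  set ε := R.adj_i₂.counit with hε
  -- the kernel
  set K := kernel (ε.app M) with hK
  have hKs : IsZero (R.iShriek.obj K) := by
    have hiso : IsIso (R.iShriek.map (ε.app M)) := by
      have h1 := R.adj_i₂.right_triangle_components M
      have h2 : R.iShriek.map (R.adj_i₂.counit.app M) =
          inv (R.adj_i₂.unit.app (R.iShriek.obj M)) :=
        (IsIso.inv_eq_of_hom_inv_id h1).symm
      rw [h2]; infer_instance
    haveI : Mono (R.iShriek.map (kernel.ι (ε.app M))) := R.iShriek.map_mono _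
    have hm0 : R.iShriek.map (kernel.ι (ε.app M)) = 0 := by
      have : R.iShriek.map (kernel.ι (ε.app M)) ≫ R.iShriek.map (ε.app M) = 0 := by
        rw [← Functor.map_comp, kernel.condition, Functor.map_zero]
      calc R.iShriek.map (kernel.ι (ε.app M))
          = (R.iShriek.map (kernel.ι (ε.app M)) ≫ R.iShriek.map (ε.app M)) ≫
              inv (R.iShriek.map (ε.app M)) := by simp
        _ = 0 := by rw [this]; simp
    exact IsZero.of_mono_eq_zero _ hm0
  have hTzero : IsZero (R.jUp.obj (R.iStar.obj (R.iShriek.obj M))) :=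
    (R.essImage_iff _).mp ⟨R.iShriek.obj M, ⟨Iso.refl _⟩⟩
  have hKj : IsZero (R.jUp.obj K) := by
    haveI : Mono (R.jUp.map (kernel.ι (ε.app M))) := R.jUp.map_mono _
    have hm0 : R.jUp.map (kernel.ι (ε.app M)) = 0 := hTzero.eq_of_tgt _ _
    exact IsZero.of_mono_eq_zero _ hm0
  obtain ⟨V, ⟨eV⟩⟩ := (R.essImage_iff K).mpr hKj
  haveI : IsIso (ε.app K) := R.adj_i₂.isIso_counit_app_of_iso eV.symm
  have hKzero : IsZero K := by
    have : IsZero (R.iStar.obj (R.iShriek.obj K)) := R.iStar.map_isZero hKs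
    exact this.of_iso (asIso (ε.app K)).symm
  exact Preadditive.mono_of_isZero_kernel _ hKzero

end Aux

section Aux2

variable [Abelian Y] [Abelian A] [Abelian X] (R : Recollement Y A X)

/-- any map from an object of `Im i_*` to `coker (ε_M)` vanishes. -/
lemma aux_to_coker_zero (M : A) (W : Y)
    (g : R.iStar.obj W ⟶ cokernel (R.adj_i₂.counit.app M)) : g = 0 := by
  haveI := R.iStar_full; haveI := R.iStar_faithful
  haveI : PreservesLimitsOfSize.{v, v} R.jUp := R.adj_j₁.rightAdjoint_preservesLimits
  haveI : Mono (R.adj_i₂.counit.app M) := aux_counit_mono R M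
  have hTzero : ∀ N : Y, IsZero (R.jUp.obj (R.iStar.obj N)) := fun N =>
    (R.essImage_iff _).mp ⟨N, ⟨Iso.refl _⟩⟩
  have hkf : IsLimit (KernelFork.ofι (R.adj_i₂.counit.app M)
      (CokernelCofork.condition (CokernelCofork.ofπ (cokernel.π (R.adj_i₂.counit.app M))
        (cokernel.condition (R.adj_i₂.counit.app M))))) :=
    Abelian.monoIsKernelOfCokernel _ (cokernelIsCokernel (R.adj_i₂.counit.app M))
  have hkf2 := isLimitForkMapOfIsLimit' R.jUp _ hkf
  have hmonoπ : Mono (R.jUp.map (cokernel.π (R.adj_i₂.counit.app M))) := by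
    apply Preadditive.mono_of_cancel_zero
    intro P a ha
    obtain ⟨l, hl⟩ := KernelFork.IsLimit.lift' hkf2 a ha
    have : l = 0 := (hTzero (R.iShriek.obj M)).eq_of_tgt _ _
    rw [← hl, this, zero_comp]
  have hcond : pullback.fst (cokernel.π (R.adj_i₂.counit.app M)) g ≫
        cokernel.π (R.adj_i₂.counit.app M) =
      pullback.snd (cokernel.π (R.adj_i₂.counit.app M)) g ≫ g := pullback.condition
  have hsnd0 : R.jUp.map (pullback.snd (cokernel.π (R.adj_i₂.counit.app M)) g) = 0 :=
    (hTzero W).eq_of_tgt _ _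
  have hfst0 : R.jUp.map (pullback.fst (cokernel.π (R.adj_i₂.counit.app M)) g) = 0 := by
    have : R.jUp.map (pullback.fst (cokernel.π (R.adj_i₂.counit.app M)) g) ≫
        R.jUp.map (cokernel.π (R.adj_i₂.counit.app M)) = 0 := by
      rw [← Functor.map_comp, hcond, Functor.map_comp, hsnd0, zero_comp]
    exact zero_of_comp_mono _ this
  have hPzero : IsZero (R.jUp.obj (pullback (cokernel.π (R.adj_i₂.counit.app M)) g)) := by
    have hlimP := isLimitOfPreserves R.jUp
      (pullbackIsPullback (cokernel.π (R.adj_i₂.counit.app M)) g)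
    rw [IsZero.iff_id_eq_zero]
    apply hlimP.hom_ext
    rintro (_ | _ | _) <;> erw [Category.id_comp, zero_comp]
    · exact (R.jUp.map_comp _ _).trans (by erw [hfst0]; exact zero_comp)
    · exact hfst0
    · exact hsnd0
  obtain ⟨V, ⟨eV⟩⟩ := (R.essImage_iff _).mpr hPzero
  have hfactor : (eV.hom ≫ pullback.fst (cokernel.π (R.adj_i₂.counit.app M)) g) ≫
      cokernel.π (R.adj_i₂.counit.app M) = 0 := by
    have hu : eV.hom ≫ pullback.fst (cokernel.π (R.adj_i₂.counit.app M)) g =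
        R.iStar.map ((R.adj_i₂.homEquiv V M)
          (eV.hom ≫ pullback.fst (cokernel.π (R.adj_i₂.counit.app M)) g)) ≫
          R.adj_i₂.counit.app M := by
      conv_lhs => rw [← (R.adj_i₂.homEquiv V M).symm_apply_apply
        (eV.hom ≫ pullback.fst (cokernel.π (R.adj_i₂.counit.app M)) g)]
      rw [Adjunction.homEquiv_counit]
    rw [hu, Category.assoc, cokernel.condition, comp_zero]
  have hfstπ : pullback.fst (cokernel.π (R.adj_i₂.counit.app M)) g ≫
      cokernel.π (R.adj_i₂.counit.app M) = 0 := by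
    have := congrArg (fun x => eV.inv ≫ x) hfactor
    simpa using this
  exact zero_of_epi_comp (pullback.snd (cokernel.π (R.adj_i₂.counit.app M)) g)
    (by rw [← hcond, hfstπ])

end Aux2

section Main

variable [Abelian Y] [Abelian A] [Abelian X] (R : Recollement Y A X)

lemma aux_isIso_sigmaComparison [HasProducts.{v} A] [HasCoproducts.{v} A]
    {I : Type v}
    (hAB4 : PreservesFiniteLimits (colim (J := Discrete I) (C := A)))
    (hmono : ∀ (f : I → A), Mono (coprodToProd f)) (f : I → A) :
    IsIso (sigmaComparison (R.iShriek ⋙ R.iStar) f) := by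
  haveI := R.iStar_full; haveI := R.iStar_faithful
  haveI := hAB4
  haveI : (colim (J := Discrete I) (C := A)).IsLeftAdjoint :=
    (colimConstAdj (J := Discrete I) (C := A)).isLeftAdjoint
  set t := R.iShriek ⋙ R.iStar with ht
  set Ft := Discrete.functor (fun i => t.obj (f i)) with hFt
  set Ff := Discrete.functor f with hFf
  set FC := Discrete.functor (fun i => cokernel (R.adj_i₂.counit.app (f i))) with hFC
  set ηt : Ft ⟶ Ff := Discrete.natTrans (fun i => R.adj_i₂.counit.app (f i.as)) with hηt
  set πt : Ff ⟶ FC :=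
    Discrete.natTrans (fun i => cokernel.π (R.adj_i₂.counit.app (f i.as))) with hπt
  have wt : ηt ≫ πt = 0 := by
    ext k
    simp [hηt, hπt, cokernel.condition]
  -- the kernel fork in the functor category, a pointwise limit
  have hfork : IsLimit (KernelFork.ofι ηt wt) := by
    refine evaluationJointlyReflectsLimits _ (fun k => ?_)
    haveI : Mono (R.adj_i₂.counit.app (f k.as)) := aux_counit_mono R (f k.as)
    haveI : Mono (((evaluation (Discrete I) A).obj k).map ηt) := aux_counit_mono R (f k.as)
    exact (isLimitMapConeForkEquiv' ((evaluation (Discrete I) A).obj k) wt).symm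
      (Abelian.monoIsKernelOfCokernel
        (CokernelCofork.ofπ (cokernel.π (R.adj_i₂.counit.app (f k.as)))
          (cokernel.condition _))
        (cokernelIsCokernel (R.adj_i₂.counit.app (f k.as))))
  -- AB4: apply `colim`
  have hq : IsLimit (KernelFork.ofι ((colim (J := Discrete I) (C := A)).map ηt)
      (by simp only [← Functor.map_comp, wt, Functor.map_zero]) :
        Fork ((colim (J := Discrete I) (C := A)).map πt) 0) :=
    isLimitForkMapOfIsLimit' _ wt hfork
  haveI hμmono : Mono ((colim (J := Discrete I) (C := A)).map ηt) :=
    mono_of_isLimit_fork hq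
  -- the comparison map composed with the counit is the coproduct of counits
  have h1 : sigmaComparison t f ≫ R.adj_i₂.counit.app (∐ f) =
      (colim (J := Discrete I) (C := A)).map ηt := by
    apply colimit.hom_ext
    rintro ⟨j⟩
    have hnat := R.adj_i₂.counit.naturality (Sigma.ι f j)
    simp only [Functor.id_map] at hnat
    simp [ι_comp_sigmaComparison_assoc, hηt, hnat]
    rfl
  -- the counit of the coproduct kills `q`
  have h2 : R.adj_i₂.counit.app (∐ f) ≫ (colim (J := Discrete I) (C := A)).map πt = 0 := by
    haveI := hmono (fun i => cokernel (R.adj_i₂.counit.app (f i)))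
    rw [← cancel_mono (coprodToProd (fun i => cokernel (R.adj_i₂.counit.app (f i))))]
    apply Pi.hom_ext
    intro j
    simp only [zero_comp, Category.assoc]
    exact aux_to_coker_zero R (f j) (R.iShriek.obj (∐ f)) _
  obtain ⟨v, hv⟩ := KernelFork.IsLimit.lift' hq (R.adj_i₂.counit.app (∐ f)) h2
  have hv' : v ≫ (colim (J := Discrete I) (C := A)).map ηt =
      R.adj_i₂.counit.app (∐ f) := hv
  haveI : Mono (R.adj_i₂.counit.app (∐ f)) := aux_counit_mono R _
  haveI hσmono : Mono (sigmaComparison t f) := mono_of_mono_fac h1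
  have hvσ : v ≫ sigmaComparison t f = 𝟙 _ := by
    rw [← cancel_mono (R.adj_i₂.counit.app (∐ f)), Category.assoc, h1, hv', Category.id_comp]
  have hσv : sigmaComparison t f ≫ v = 𝟙 _ := by
    rw [← cancel_mono (sigmaComparison t f), Category.assoc, hvσ,
      Category.id_comp, Category.comp_id]
  exact ⟨v, hσv, hvσ⟩

end Main

/-- Let `(Y, A, X)` be a recollement of abelian categories with `A` AB3* and AB4 such
that every canonical morphism from a coproduct to the corresponding product is a
monomorphism. Then `i^!` commutes with coproducts. -/
theorem recollement_iShriek_preservesCoproducts [Abelian Y] [Abelian A] [Abelian X]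
    (R : Recollement Y A X) [HasProducts.{v} A] [HasCoproducts.{v} A]
    (hAB4 : ∀ I : Type v,
      Nonempty (PreservesFiniteLimits (colim (J := Discrete I) (C := A))))
    (hmono : ∀ (I : Type v) (f : I → A), Mono (coprodToProd f)) :
    ∀ I : Type v, Nonempty (PreservesColimitsOfShape (Discrete I) R.iShriek) := by
  intro I
  obtain ⟨hab4⟩ := hAB4 I
  haveI := R.iStar_full; haveI := R.iStar_faithful
  haveI : ReflectsColimitsOfSize.{v, v} R.iStar := fullyFaithful_reflectsColimits R.iStar
  haveI : ∀ f : I → A, PreservesColimit (Discrete.functor f) (R.iShriek ⋙ R.iStar) := by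
    intro f
    haveI := aux_isIso_sigmaComparison R hab4 (hmono I) f
    exact PreservesCoproduct.of_iso_comparison _ f
  haveI hT : PreservesColimitsOfShape (Discrete I) (R.iShriek ⋙ R.iStar) :=
    preservesColimitsOfShape_of_discrete _
  refine ⟨⟨fun {K} => ⟨fun {c} hc => ⟨isColimitOfReflects R.iStar ?_⟩⟩⟩⟩
  exact isColimitOfPreserves (R.iShriek ⋙ R.iStar) hc
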